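/- Gauge freedom for the generalized classical Yang–Baxter equation: let Λ ⊆ ℂ, U ⊆ ℂ^N open, and let r(λ,μ,x) be a matrix-valued function on Λ×Λ×U with entries differentiable in x, such that (a) [h⊗Id + Id⊗h, r(λ,μ,x)] = 0 for every diagonal N×N matrix h, (b) Σ_{ν=1}^N ∂_{x_ν} r(λ,μ,x) = 0, and (c) r satisfies the generalized classical Yang–Baxter equation [r_{12},r_{13}]+[r_{12},r_{23}]+[r_{13},r_{23}] − Σ_ν (e_{νν})^{(1)} ∂_{x_ν} r_{23} + Σ_ν (e_{νν})^{(2)} ∂_{x_ν} r_{13} − Σ_ν (e_{νν})^{(3)} ∂_{x_ν} r_{12} = 0 with r_{ab} = r(λ_a,λ_b,x), for all λ_1,λ_2,λ_3 ∈ Λ and x ∈ U. Then for every function α: Λ→ℂ, the matrix r̃(λ,μ,x) := (e^{α(λ)X(x)}⊗e^{α(μ)X(x)}) · r(λ,μ,x) · (e^{−α(λ)X(x)}⊗e^{−α(μ)X(x)}) − (α(λ)−α(μ))·C also satisfies conditions (a), (b), and the same generalized classical Yang–Baxter equation, where X(x) := diag(x_1,…,x_N) − ((x_1+…+x_N)/N)·Id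 and C := Σ_{i=1}^N e_{ii}⊗e_{ii} − (1/N) Id⊗Id. -/

import Mathlib

/- STATEMENT 4: Gauge freedom for the generalized classical Yang–Baxter equation:
   if r satisfies (a) Cartan invariance, (b) Σ_ν ∂_{x_ν} r = 0, and (c) the
   generalized CYBE, then so does
   r̃(λ,μ,x) = (e^{α(λ)X}⊗e^{α(μ)X}) r (e^{−α(λ)X}⊗e^{−α(μ)X}) − (α(λ)−α(μ))·C. -/

noncomputable section
open Matrix Complex
open scoped Kronecker BigOperators

variable (N : ℕ)

def E (i j : Fin N) : Matrix (Fin N) (Fin N) ℂ := Matrix.single i j 1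

def pl12 (A : Matrix (Fin N × Fin N) (Fin N × Fin N) ℂ) :
    Matrix (Fin N × Fin N × Fin N) (Fin N × Fin N × Fin N) ℂ :=
  fun p q => A (p.1, p.2.1) (q.1, q.2.1) * (if p.2.2 = q.2.2 then 1 else 0)

def pl13 (A : Matrix (Fin N × Fin N) (Fin N × Fin N) ℂ) :
    Matrix (Fin N × Fin N × Fin N) (Fin N × Fin N × Fin N) ℂ :=
  fun p q => A (p.1, p.2.2) (q.1, q.2.2) * (if p.2.1 = q.2.1 then 1 else 0)

def pl23 (A : Matrix (Fin N × Fin N) (Fin N × Fin N) ℂ) :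
    Matrix (Fin N × Fin N × Fin N) (Fin N × Fin N × Fin N) ℂ :=
  fun p q => A (p.2.1, p.2.2) (q.2.1, q.2.2) * (if p.1 = q.1 then 1 else 0)

def pl1 (h : Matrix (Fin N) (Fin N) ℂ) :
    Matrix (Fin N × Fin N × Fin N) (Fin N × Fin N × Fin N) ℂ :=
  fun p q => h p.1 q.1 * (if p.2.1 = q.2.1 then 1 else 0) * (if p.2.2 = q.2.2 then 1 else 0)

def pl2 (h : Matrix (Fin N) (Fin N) ℂ) :
    Matrix (Fin N × Fin N × Fin N) (Fin N × Fin N × Fin N) ℂ :=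
  fun p q => h p.2.1 q.2.1 * (if p.1 = q.1 then 1 else 0) * (if p.2.2 = q.2.2 then 1 else 0)

def pl3 (h : Matrix (Fin N) (Fin N) ℂ) :
    Matrix (Fin N × Fin N × Fin N) (Fin N × Fin N × Fin N) ℂ :=
  fun p q => h p.2.2 q.2.2 * (if p.1 = q.1 then 1 else 0) * (if p.2.1 = q.2.1 then 1 else 0)

def pderivMat {α : Type} (ν : Fin N)
    (f : (Fin N → ℂ) → Matrix α α ℂ) (x : Fin N → ℂ) : Matrix α α ℂ :=
  fun p q => deriv (fun t : ℂ => f (Function.update x ν t) p q) (x ν)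

def mcomm {α : Type} [Fintype α] [DecidableEq α] (A B : Matrix α α ℂ) : Matrix α α ℂ :=
  A * B - B * A

/-- condition (a): Cartan invariance [h⊗Id + Id⊗h, r] = 0 for every diagonal h -/
def CartanInv (A : Matrix (Fin N × Fin N) (Fin N × Fin N) ℂ) : Prop :=
  ∀ d : Fin N → ℂ,
    (Matrix.diagonal d ⊗ₖ (1 : Matrix (Fin N) (Fin N) ℂ) +
      (1 : Matrix (Fin N) (Fin N) ℂ) ⊗ₖ Matrix.diagonal d) * A =
    A * (Matrix.diagonal d ⊗ₖ (1 : Matrix (Fin N) (Fin N) ℂ) +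
      (1 : Matrix (Fin N) (Fin N) ℂ) ⊗ₖ Matrix.diagonal d)

/-- the generalized classical Yang–Baxter equation for a function r(λ,μ,x)
    at spectral parameters λ₁, λ₂, λ₃ and point x -/
def GCYBE (r : ℂ → ℂ → (Fin N → ℂ) → Matrix (Fin N × Fin N) (Fin N × Fin N) ℂ)
    (lam₁ lam₂ lam₃ : ℂ) (x : Fin N → ℂ) : Prop :=
  mcomm (pl12 N (r lam₁ lam₂ x)) (pl13 N (r lam₁ lam₃ x)) +
  mcomm (pl12 N (r lam₁ lam₂ x)) (pl23 N (r lam₂ lam₃ x)) +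
  mcomm (pl13 N (r lam₁ lam₃ x)) (pl23 N (r lam₂ lam₃ x)) -
  (∑ ν : Fin N, pl1 N (E N ν ν) * pl23 N (pderivMat N ν (r lam₂ lam₃) x)) +
  (∑ ν : Fin N, pl2 N (E N ν ν) * pl13 N (pderivMat N ν (r lam₁ lam₃) x)) -
  (∑ ν : Fin N, pl3 N (E N ν ν) * pl12 N (pderivMat N ν (r lam₁ lam₂) x)) = 0

/-- X(x) = diag(x₁,…,x_N) − ((x₁+…+x_N)/N)·Id -/
def Xmat (x : Fin N → ℂ) : Matrix (Fin N) (Fin N) ℂ :=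
  Matrix.diagonal x - ((∑ i : Fin N, x i) / (N : ℂ)) • (1 : Matrix (Fin N) (Fin N) ℂ)

/-- C = Σ_i e_{ii}⊗e_{ii} − (1/N) Id⊗Id -/
def Cmat : Matrix (Fin N × Fin N) (Fin N × Fin N) ℂ :=
  (∑ i : Fin N, E N i i ⊗ₖ E N i i) -
    ((N : ℂ))⁻¹ • (1 : Matrix (Fin N × Fin N) (Fin N × Fin N) ℂ)

/-- the gauge-transformed r-matrix r̃ -/
def rGauge (α : ℂ → ℂ) (r : ℂ → ℂ → (Fin N → ℂ) → Matrix (Fin N × Fin N) (Fin N × Fin N) ℂ)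
    (lam mu : ℂ) (x : Fin N → ℂ) : Matrix (Fin N × Fin N) (Fin N × Fin N) ℂ :=
  (NormedSpace.exp (α lam • Xmat N x) ⊗ₖ NormedSpace.exp (α mu • Xmat N x)) *
    r lam mu x *
    (NormedSpace.exp (-(α lam) • Xmat N x) ⊗ₖ NormedSpace.exp (-(α mu) • Xmat N x)) -
  (α lam - α mu) • Cmat N

namespace GaugeAux

variable {N : ℕ}

lemma exp_smul_Xmat (c : ℂ) (x : Fin N → ℂ) :
    NormedSpace.exp (c • Xmat N x)
      = Matrix.diagonal (fun i => Complex.exp (c * (x i - (∑ i, x i) / (N:ℂ)))) := by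
  have h : c • Xmat N x = Matrix.diagonal (fun i => c * (x i - (∑ i, x i) / (N:ℂ))) := by
    ext i j
    by_cases h : i = j <;>
      simp [Xmat, Matrix.diagonal_apply, Matrix.one_apply, h, Matrix.smul_apply, Matrix.sub_apply]
  rw [h, Matrix.exp_diagonal, Pi.exp_def]
  simp [← Complex.exp_eq_exp_ℂ]

lemma Cmat_eq : Cmat N = Matrix.diagonal (fun p : Fin N × Fin N => (if p.1 = p.2 then (1:ℂ) else 0) - (N:ℂ)⁻¹) := by
  ext ⟨i,j⟩ ⟨k,l⟩
  simp only [Cmat, E, Matrix.sub_apply, Matrix.sum_apply, Matrix.kroneckerMap_apply,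
    Matrix.smul_apply, Matrix.diagonal_apply, Matrix.one_apply, Prod.mk.injEq, smul_eq_mul,
    mul_one, Matrix.single, Matrix.of_apply]
  have hs : (∑ x : Fin N, (if x = i ∧ x = k then (1:ℂ) else 0) * if x = j ∧ x = l then 1 else 0)
      = if i = k ∧ i = j ∧ j = l then 1 else 0 := by
    rw [Finset.sum_eq_single i]
    · by_cases h1 : i = k <;> by_cases h2 : i = j <;> by_cases h3 : j = l <;> simp_all
    · intro x _ hx
      by_cases h1 : x = j <;> simp_all
    · simp
  rw [hs]
  by_cases h1 : i = k <;> by_cases h2 : i = j <;> by_cases h3 : j = l <;> simp_all <;> ring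

lemma exp_mul_exp (u v w : ℂ) (m : ℂ) (h : u + v = w) :
    Complex.exp u * m * Complex.exp v = Complex.exp w * m := by
  rw [mul_right_comm, ← Complex.exp_add, h]

lemma rGauge_apply (α : ℂ → ℂ) (r : ℂ → ℂ → (Fin N → ℂ) → Matrix (Fin N × Fin N) (Fin N × Fin N) ℂ)
    (lam mu : ℂ) (x : Fin N → ℂ) (p q : Fin N × Fin N) :
    rGauge N α r lam mu x p q
      = Complex.exp (α lam * (x p.1 - x q.1) + α mu * (x p.2 - x q.2)) * r lam mu x p q
        - (α lam - α mu) * Cmat N p q := by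
  simp only [rGauge, exp_smul_Xmat, Matrix.diagonal_kronecker_diagonal, Matrix.sub_apply,
    Matrix.smul_apply, Matrix.mul_diagonal, Matrix.diagonal_mul, smul_eq_mul]
  rw [← Complex.exp_add, ← Complex.exp_add]
  congr 1
  exact exp_mul_exp _ _ _ _ (by ring)

lemma cartan_diag (d : Fin N → ℂ) :
    (Matrix.diagonal d ⊗ₖ (1 : Matrix (Fin N) (Fin N) ℂ)
      + (1 : Matrix (Fin N) (Fin N) ℂ) ⊗ₖ Matrix.diagonal d)
      = Matrix.diagonal (fun p : Fin N × Fin N => d p.1 + d p.2) := by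
  rw [← Matrix.diagonal_one, Matrix.diagonal_kronecker_diagonal,
    Matrix.diagonal_kronecker_diagonal, Matrix.diagonal_add]
  congr 1
  funext p
  simp

lemma cartan_entry {A : Matrix (Fin N × Fin N) (Fin N × Fin N) ℂ} (hA : CartanInv N A)
    (d : Fin N → ℂ) (p q : Fin N × Fin N) :
    (d p.1 + d p.2) * A p q = A p q * (d q.1 + d q.2) := by
  have h := hA d
  rw [cartan_diag] at h
  have h2 := congrFun (congrFun h p) q
  simpa [Matrix.diagonal_mul, Matrix.mul_diagonal] using h2

lemma diag_entry_comm {I : Type} [DecidableEq I] (v : I → ℂ) (w : I → ℂ) (p q : I) :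
    w p * Matrix.diagonal v p q = Matrix.diagonal v p q * w q := by
  by_cases h : p = q <;> simp [h, Matrix.diagonal_apply_ne, mul_comm]

lemma rGauge_cartan (α : ℂ → ℂ)
    (r : ℂ → ℂ → (Fin N → ℂ) → Matrix (Fin N × Fin N) (Fin N × Fin N) ℂ)
    (lam mu : ℂ) (x : Fin N → ℂ) (h : CartanInv N (r lam mu x)) :
    CartanInv N (rGauge N α r lam mu x) := by
  intro d
  rw [cartan_diag]
  ext p q
  simp only [Matrix.diagonal_mul, Matrix.mul_diagonal]
  rw [rGauge_apply]
  have h1 := cartan_entry h d p q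
  have h2 : (d p.1 + d p.2) * Cmat N p q = Cmat N p q * (d q.1 + d q.2) := by
    rw [Cmat_eq]; exact diag_entry_comm _ (fun p => d p.1 + d p.2) p q
  linear_combination Complex.exp (α lam * (x p.1 - x q.1) + α mu * (x p.2 - x q.2)) * h1
    - (α lam - α mu) * h2

def dta (ν i : Fin N) : ℂ := if ν = i then 1 else 0

lemma hasDerivAt_upd (x : Fin N → ℂ) (ν i : Fin N) (t₀ : ℂ) :
    HasDerivAt (fun t => Function.update x ν t i) (dta ν i) t₀ := by
  by_cases h : ν = i
  · subst h
    simpa [dta] using (hasDerivAt_id' t₀)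
  · simpa [dta, h, Function.update_of_ne (Ne.symm h)] using hasDerivAt_const t₀ (x i)

lemma diffAt_entry {U : Set (Fin N → ℂ)} (hU : IsOpen U) {f : (Fin N → ℂ) → ℂ}
    (hf : DifferentiableOn ℂ f U) {x : Fin N → ℂ} (hx : x ∈ U) (ν : Fin N) :
    DifferentiableAt ℂ (fun t => f (Function.update x ν t)) (x ν) := by
  have h1 : DifferentiableAt ℂ f x := hf.differentiableAt (hU.mem_nhds hx)
  have h2 : DifferentiableAt ℂ (fun t : ℂ => Function.update x ν t) (x ν) := by
    apply differentiableAt_pi.mpr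
    intro i
    exact (hasDerivAt_upd x ν i _).differentiableAt
  have hx' : Function.update x ν (x ν) = x := Function.update_eq_self ν x
  have h1' : DifferentiableAt ℂ f (Function.update x ν (x ν)) := by rwa [hx']
  exact DifferentiableAt.comp (x ν) h1' h2

lemma pderiv_rGauge_apply (α : ℂ → ℂ)
    (r : ℂ → ℂ → (Fin N → ℂ) → Matrix (Fin N × Fin N) (Fin N × Fin N) ℂ)
    (lam mu : ℂ) (x : Fin N → ℂ) (ν : Fin N) (p q : Fin N × Fin N)
    (hd : DifferentiableAt ℂ (fun t => r lam mu (Function.update x ν t) p q) (x ν)) :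
    pderivMat N ν (rGauge N α r lam mu) x p q
      = Complex.exp (α lam * (x p.1 - x q.1) + α mu * (x p.2 - x q.2)) *
        ((α lam * (dta ν p.1 - dta ν q.1) + α mu * (dta ν p.2 - dta ν q.2)) * r lam mu x p q
          + pderivMat N ν (r lam mu) x p q) := by
  have hφ : HasDerivAt (fun t => α lam * (Function.update x ν t p.1 - Function.update x ν t q.1)
      + α mu * (Function.update x ν t p.2 - Function.update x ν t q.2))
      (α lam * (dta ν p.1 - dta ν q.1) + α mu * (dta ν p.2 - dta ν q.2)) (x ν) :=
    (((hasDerivAt_upd x ν p.1 _).sub (hasDerivAt_upd x ν q.1 _)).const_mul (α lam)).add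
      (((hasDerivAt_upd x ν p.2 _).sub (hasDerivAt_upd x ν q.2 _)).const_mul (α mu))
  have hg := hd.hasDerivAt
  have h := (hφ.cexp.mul hg).sub_const ((α lam - α mu) * Cmat N p q)
  have he : (fun t => rGauge N α r lam mu (Function.update x ν t) p q)
      = fun t => Complex.exp (α lam * (Function.update x ν t p.1 - Function.update x ν t q.1)
          + α mu * (Function.update x ν t p.2 - Function.update x ν t q.2)) *
          r lam mu (Function.update x ν t) p q - (α lam - α mu) * Cmat N p q :=
    funext fun t => rGauge_apply α r lam mu (Function.update x ν t) p q
  show deriv (fun t => rGauge N α r lam mu (Function.update x ν t) p q) (x ν) = _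
  rw [he]; erw [h.deriv]
  simp only [Function.update_eq_self]
  show _ = _ * (_ * _ + deriv (fun t => r lam mu (Function.update x ν t) p q) (x ν))
  ring

lemma rGauge_sum_pderiv (α : ℂ → ℂ)
    (r : ℂ → ℂ → (Fin N → ℂ) → Matrix (Fin N × Fin N) (Fin N × Fin N) ℂ)
    (lam mu : ℂ) {U : Set (Fin N → ℂ)} (hU : IsOpen U) {x : Fin N → ℂ} (hx : x ∈ U)
    (hdiff : ∀ p q : Fin N × Fin N, DifferentiableOn ℂ (fun x => r lam mu x p q) U)
    (hb : (∑ ν : Fin N, pderivMat N ν (r lam mu) x) = 0) :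
    (∑ ν : Fin N, pderivMat N ν (rGauge N α r lam mu) x) = 0 := by
  ext p q
  simp only [Matrix.sum_apply, Matrix.zero_apply]
  have hrw : ∀ ν : Fin N, pderivMat N ν (rGauge N α r lam mu) x p q
      = Complex.exp (α lam * (x p.1 - x q.1) + α mu * (x p.2 - x q.2)) *
        ((α lam * (dta ν p.1 - dta ν q.1) + α mu * (dta ν p.2 - dta ν q.2)) * r lam mu x p q
          + pderivMat N ν (r lam mu) x p q) := fun ν =>
    pderiv_rGauge_apply α r lam mu x ν p q (diffAt_entry hU (hdiff p q) hx ν)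
  rw [Finset.sum_congr rfl (fun ν _ => hrw ν), ← Finset.mul_sum]
  have h1 : (∑ ν : Fin N, ((α lam * (dta ν p.1 - dta ν q.1) + α mu * (dta ν p.2 - dta ν q.2)) * r lam mu x p q
          + pderivMat N ν (r lam mu) x p q)) = 0 := by
    rw [Finset.sum_add_distrib, ← Finset.sum_mul]
    have hb' : (∑ ν : Fin N, pderivMat N ν (r lam mu) x p q) = 0 := by
      have := congrFun (congrFun hb p) q
      simpa [Matrix.sum_apply] using this
    have h2 : (∑ ν : Fin N, (α lam * (dta ν p.1 - dta ν q.1) + α mu * (dta ν p.2 - dta ν q.2))) = 0 := by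
      simp [dta, Finset.sum_add_distrib, Finset.sum_sub_distrib, ← Finset.mul_sum]
    rw [h2, hb']; ring
  rw [h1, mul_zero]

-- ============ part (c) toolkit ============

lemma sum_dta_weighted (i : Fin N) (f : Fin N → ℂ) : (∑ ν : Fin N, dta ν i * f ν) = f i := by
  have : ∀ ν : Fin N, dta ν i * f ν = if ν = i then f ν else 0 := by
    intro ν; by_cases h : ν = i <;> simp [dta, h]
  rw [Finset.sum_congr rfl (fun ν _ => this ν), Finset.sum_ite_eq']
  simp

lemma mcomm_diag_left {I : Type} [Fintype I] [DecidableEq I] (w : I → ℂ) (M : Matrix I I ℂ)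
    (p q : I) : mcomm (Matrix.diagonal w) M p q = (w p - w q) * M p q := by
  simp [mcomm, Matrix.sub_apply, Matrix.diagonal_mul, Matrix.mul_diagonal]
  ring

lemma mcomm_diag_right {I : Type} [Fintype I] [DecidableEq I] (w : I → ℂ) (M : Matrix I I ℂ)
    (p q : I) : mcomm M (Matrix.diagonal w) p q = (w q - w p) * M p q := by
  simp [mcomm, Matrix.sub_apply, Matrix.diagonal_mul, Matrix.mul_diagonal]
  ring

lemma diag_comm {I : Type} [Fintype I] [DecidableEq I] (u v : I → ℂ) :
    Matrix.diagonal u * Matrix.diagonal v = Matrix.diagonal v * Matrix.diagonal u := by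
  rw [Matrix.diagonal_mul_diagonal, Matrix.diagonal_mul_diagonal,
    show (fun i => u i * v i) = fun i => v i * u i from funext fun i => mul_comm _ _]

lemma mcomm_diag_diag {I : Type} [Fintype I] [DecidableEq I] (u v : I → ℂ) :
    mcomm (Matrix.diagonal u) (Matrix.diagonal v) = 0 := by
  rw [mcomm, diag_comm, sub_self]

lemma conj_mul {I : Type} [Fintype I] [DecidableEq I] {G G' : Matrix I I ℂ}
    (hG'G : G' * G = 1) (A B : Matrix I I ℂ) :
    (G * A * G') * (G * B * G') = G * (A * B) * G' := by
  simp only [Matrix.mul_assoc]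
  rw [← Matrix.mul_assoc G' G (B * G'), hG'G, Matrix.one_mul]

lemma mcomm_conj {I : Type} [Fintype I] [DecidableEq I] {G G' : Matrix I I ℂ}
    (hG'G : G' * G = 1) (A B : Matrix I I ℂ) :
    mcomm (G * A * G') (G * B * G') = G * mcomm A B * G' := by
  simp only [mcomm, conj_mul hG'G, Matrix.mul_sub, Matrix.sub_mul]

lemma mcomm_gauge {I : Type} [Fintype I] [DecidableEq I] {G G' : Matrix I I ℂ}
    (hG'G : G' * G = 1) (A B K K' : Matrix I I ℂ) (s t : ℂ)
    (hKK' : mcomm K K' = 0) :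
    mcomm (G * A * G' - s • K) (G * B * G' - t • K')
      = G * mcomm A B * G' - t • mcomm (G * A * G') K' - s • mcomm K (G * B * G') := by
  have hKK'' : K * K' = K' * K := by
    have := hKK'; rw [mcomm, sub_eq_zero] at this; exact this
  simp only [mcomm, Matrix.sub_mul, Matrix.mul_sub, Matrix.smul_mul, Matrix.mul_smul,
    conj_mul hG'G, smul_smul, smul_sub, Matrix.mul_sub, hKK'']
  rw [mul_comm s t]
  abel

def g3 (a b c : ℂ) (x : Fin N → ℂ) : Fin N × Fin N × Fin N → ℂ :=
  fun p => Complex.exp (a * x p.1 + b * x p.2.1 + c * x p.2.2)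

lemma g3_mul_inv (a b c : ℂ) (x : Fin N → ℂ) :
    Matrix.diagonal (g3 a b c x) * Matrix.diagonal (g3 (-a) (-b) (-c) x) = 1 := by
  rw [Matrix.diagonal_mul_diagonal]
  have h : (fun p => g3 a b c x p * g3 (-a) (-b) (-c) x p)
      = fun _ : Fin N × Fin N × Fin N => (1:ℂ) := by
    funext p
    simp only [g3, ← Complex.exp_add]
    rw [show a * x p.1 + b * x p.2.1 + c * x p.2.2 + (-a * x p.1 + -b * x p.2.1 + -c * x p.2.2)
      = 0 from by ring, Complex.exp_zero]
  rw [h, Matrix.diagonal_one]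

lemma g3_inv_mul (a b c : ℂ) (x : Fin N → ℂ) :
    Matrix.diagonal (g3 (-a) (-b) (-c) x) * Matrix.diagonal (g3 a b c x) = 1 := by
  rw [diag_comm]; exact g3_mul_inv a b c x

lemma E_diag (ν : Fin N) : E N ν ν = Matrix.diagonal (dta ν) := by
  ext i j
  by_cases h1 : ν = i <;> by_cases h2 : ν = j <;> by_cases h3 : i = j <;>
    simp_all [E, Matrix.single, dta, Matrix.diagonal_apply]

lemma pl1_diag (d : Fin N → ℂ) : pl1 N (Matrix.diagonal d)
    = Matrix.diagonal (fun p : Fin N × Fin N × Fin N => d p.1) := by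
  ext ⟨p1,p2,p3⟩ ⟨q1,q2,q3⟩
  by_cases h1 : p1 = q1 <;> by_cases h2 : p2 = q2 <;> by_cases h3 : p3 = q3 <;>
    simp_all [pl1, Matrix.diagonal_apply, Prod.ext_iff]

lemma pl2_diag (d : Fin N → ℂ) : pl2 N (Matrix.diagonal d)
    = Matrix.diagonal (fun p : Fin N × Fin N × Fin N => d p.2.1) := by
  ext ⟨p1,p2,p3⟩ ⟨q1,q2,q3⟩
  by_cases h1 : p1 = q1 <;> by_cases h2 : p2 = q2 <;> by_cases h3 : p3 = q3 <;>
    simp_all [pl2, Matrix.diagonal_apply, Prod.ext_iff]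

lemma pl3_diag (d : Fin N → ℂ) : pl3 N (Matrix.diagonal d)
    = Matrix.diagonal (fun p : Fin N × Fin N × Fin N => d p.2.2) := by
  ext ⟨p1,p2,p3⟩ ⟨q1,q2,q3⟩
  by_cases h1 : p1 = q1 <;> by_cases h2 : p2 = q2 <;> by_cases h3 : p3 = q3 <;>
    simp_all [pl3, Matrix.diagonal_apply, Prod.ext_iff]

lemma pl12_diag (d : Fin N × Fin N → ℂ) : pl12 N (Matrix.diagonal d)
    = Matrix.diagonal (fun p : Fin N × Fin N × Fin N => d (p.1, p.2.1)) := by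
  ext ⟨p1,p2,p3⟩ ⟨q1,q2,q3⟩
  by_cases h1 : p1 = q1 <;> by_cases h2 : p2 = q2 <;> by_cases h3 : p3 = q3 <;>
    simp_all [pl12, Matrix.diagonal_apply, Prod.ext_iff]

lemma pl13_diag (d : Fin N × Fin N → ℂ) : pl13 N (Matrix.diagonal d)
    = Matrix.diagonal (fun p : Fin N × Fin N × Fin N => d (p.1, p.2.2)) := by
  ext ⟨p1,p2,p3⟩ ⟨q1,q2,q3⟩
  by_cases h1 : p1 = q1 <;> by_cases h2 : p2 = q2 <;> by_cases h3 : p3 = q3 <;>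
    simp_all [pl13, Matrix.diagonal_apply, Prod.ext_iff]

lemma pl23_diag (d : Fin N × Fin N → ℂ) : pl23 N (Matrix.diagonal d)
    = Matrix.diagonal (fun p : Fin N × Fin N × Fin N => d (p.2.1, p.2.2)) := by
  ext ⟨p1,p2,p3⟩ ⟨q1,q2,q3⟩
  by_cases h1 : p1 = q1 <;> by_cases h2 : p2 = q2 <;> by_cases h3 : p3 = q3 <;>
    simp_all [pl23, Matrix.diagonal_apply, Prod.ext_iff]

lemma ite_flip (i j : Fin N) : (if i = j then (1:ℂ) else 0) = if j = i then 1 else 0 := by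
  by_cases h : i = j
  · simp [h]
  · simp [h, Ne.symm h]

section Fconj

variable (α : ℂ → ℂ) (r : ℂ → ℂ → (Fin N → ℂ) → Matrix (Fin N × Fin N) (Fin N × Fin N) ℂ)
variable (x : Fin N → ℂ)

lemma F12 (lam1 lam2 : ℂ) (w : ℂ) :
    pl12 N (rGauge N α r lam1 lam2 x)
      = Matrix.diagonal (g3 (α lam1) (α lam2) w x) * pl12 N (r lam1 lam2 x) *
          Matrix.diagonal (g3 (-(α lam1)) (-(α lam2)) (-w) x)
        - (α lam1 - α lam2) • pl12 N (Cmat N) := by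
  ext p q
  simp only [pl12, Matrix.sub_apply, Matrix.smul_apply, Matrix.mul_diagonal,
    Matrix.diagonal_mul, smul_eq_mul, g3]
  rw [rGauge_apply]
  by_cases h : p.2.2 = q.2.2
  · simp only [if_pos h, mul_one]
    have hE : Complex.exp (α lam1 * x p.1 + α lam2 * x p.2.1 + w * x p.2.2) *
        Complex.exp (-(α lam1) * x q.1 + -(α lam2) * x q.2.1 + -w * x q.2.2)
        = Complex.exp (α lam1 * (x p.1 - x q.1) + α lam2 * (x p.2.1 - x q.2.1)) := by
      rw [← Complex.exp_add]; congr 1; rw [h]; ring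
    linear_combination (-(r lam1 lam2 x (p.1, p.2.1) (q.1, q.2.1))) * hE
  · simp [h]

lemma F13 (lam1 lam3 : ℂ) (w : ℂ) :
    pl13 N (rGauge N α r lam1 lam3 x)
      = Matrix.diagonal (g3 (α lam1) w (α lam3) x) * pl13 N (r lam1 lam3 x) *
          Matrix.diagonal (g3 (-(α lam1)) (-w) (-(α lam3)) x)
        - (α lam1 - α lam3) • pl13 N (Cmat N) := by
  ext p q
  simp only [pl13, Matrix.sub_apply, Matrix.smul_apply, Matrix.mul_diagonal,
    Matrix.diagonal_mul, smul_eq_mul, g3]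
  rw [rGauge_apply]
  by_cases h : p.2.1 = q.2.1
  · simp only [if_pos h, mul_one]
    have hE : Complex.exp (α lam1 * x p.1 + w * x p.2.1 + α lam3 * x p.2.2) *
        Complex.exp (-(α lam1) * x q.1 + -w * x q.2.1 + -(α lam3) * x q.2.2)
        = Complex.exp (α lam1 * (x p.1 - x q.1) + α lam3 * (x p.2.2 - x q.2.2)) := by
      rw [← Complex.exp_add]; congr 1; rw [h]; ring
    linear_combination (-(r lam1 lam3 x (p.1, p.2.2) (q.1, q.2.2))) * hE
  · simp [h]

lemma F23 (lam2 lam3 : ℂ) (w : ℂ) :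
    pl23 N (rGauge N α r lam2 lam3 x)
      = Matrix.diagonal (g3 w (α lam2) (α lam3) x) * pl23 N (r lam2 lam3 x) *
          Matrix.diagonal (g3 (-w) (-(α lam2)) (-(α lam3)) x)
        - (α lam2 - α lam3) • pl23 N (Cmat N) := by
  ext p q
  simp only [pl23, Matrix.sub_apply, Matrix.smul_apply, Matrix.mul_diagonal,
    Matrix.diagonal_mul, smul_eq_mul, g3]
  rw [rGauge_apply]
  by_cases h : p.1 = q.1
  · simp only [if_pos h, mul_one]
    have hE : Complex.exp (w * x p.1 + α lam2 * x p.2.1 + α lam3 * x p.2.2) *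
        Complex.exp (-w * x q.1 + -(α lam2) * x q.2.1 + -(α lam3) * x q.2.2)
        = Complex.exp (α lam2 * (x p.2.1 - x q.2.1) + α lam3 * (x p.2.2 - x q.2.2)) := by
      rw [← Complex.exp_add]; congr 1; rw [h]; ring
    linear_combination (-(r lam2 lam3 x (p.2.1, p.2.2) (q.2.1, q.2.2))) * hE
  · simp [h]

lemma F12d (lam1 lam2 : ℂ) (w : ℂ) (ν : Fin N)
    (hd : ∀ p q : Fin N × Fin N,
      DifferentiableAt ℂ (fun t => r lam1 lam2 (Function.update x ν t) p q) (x ν)) :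
    pl12 N (pderivMat N ν (rGauge N α r lam1 lam2) x)
      = Matrix.diagonal (g3 (α lam1) (α lam2) w x) * pl12 N (pderivMat N ν (r lam1 lam2) x) *
          Matrix.diagonal (g3 (-(α lam1)) (-(α lam2)) (-w) x)
        + mcomm (Matrix.diagonal
            (fun p : Fin N × Fin N × Fin N => α lam1 * dta ν p.1 + α lam2 * dta ν p.2.1))
            (Matrix.diagonal (g3 (α lam1) (α lam2) w x) * pl12 N (r lam1 lam2 x) *
              Matrix.diagonal (g3 (-(α lam1)) (-(α lam2)) (-w) x)) := by
  ext p q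
  simp only [Matrix.add_apply]
  rw [mcomm_diag_left]
  simp only [pl12, Matrix.mul_diagonal, Matrix.diagonal_mul, g3]
  rw [pderiv_rGauge_apply α r lam1 lam2 x ν _ _ (hd _ _)]
  by_cases h : p.2.2 = q.2.2
  · simp only [if_pos h, mul_one]
    have hE : Complex.exp (α lam1 * x p.1 + α lam2 * x p.2.1 + w * x p.2.2) *
        Complex.exp (-(α lam1) * x q.1 + -(α lam2) * x q.2.1 + -w * x q.2.2)
        = Complex.exp (α lam1 * (x p.1 - x q.1) + α lam2 * (x p.2.1 - x q.2.1)) := by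
      rw [← Complex.exp_add]; congr 1; rw [h]; ring
    linear_combination (-(pderivMat N ν (r lam1 lam2) x (p.1, p.2.1) (q.1, q.2.1))
      - (α lam1 * dta ν p.1 + α lam2 * dta ν p.2.1
          - (α lam1 * dta ν q.1 + α lam2 * dta ν q.2.1)) *
        r lam1 lam2 x (p.1, p.2.1) (q.1, q.2.1)) * hE
  · simp [h]

lemma F13d (lam1 lam3 : ℂ) (w : ℂ) (ν : Fin N)
    (hd : ∀ p q : Fin N × Fin N,
      DifferentiableAt ℂ (fun t => r lam1 lam3 (Function.update x ν t) p q) (x ν)) :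
    pl13 N (pderivMat N ν (rGauge N α r lam1 lam3) x)
      = Matrix.diagonal (g3 (α lam1) w (α lam3) x) * pl13 N (pderivMat N ν (r lam1 lam3) x) *
          Matrix.diagonal (g3 (-(α lam1)) (-w) (-(α lam3)) x)
        + mcomm (Matrix.diagonal
            (fun p : Fin N × Fin N × Fin N => α lam1 * dta ν p.1 + α lam3 * dta ν p.2.2))
            (Matrix.diagonal (g3 (α lam1) w (α lam3) x) * pl13 N (r lam1 lam3 x) *
              Matrix.diagonal (g3 (-(α lam1)) (-w) (-(α lam3)) x)) := by
  ext p q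
  simp only [Matrix.add_apply]
  rw [mcomm_diag_left]
  simp only [pl13, Matrix.mul_diagonal, Matrix.diagonal_mul, g3]
  rw [pderiv_rGauge_apply α r lam1 lam3 x ν _ _ (hd _ _)]
  by_cases h : p.2.1 = q.2.1
  · simp only [if_pos h, mul_one]
    have hE : Complex.exp (α lam1 * x p.1 + w * x p.2.1 + α lam3 * x p.2.2) *
        Complex.exp (-(α lam1) * x q.1 + -w * x q.2.1 + -(α lam3) * x q.2.2)
        = Complex.exp (α lam1 * (x p.1 - x q.1) + α lam3 * (x p.2.2 - x q.2.2)) := by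
      rw [← Complex.exp_add]; congr 1; rw [h]; ring
    linear_combination (-(pderivMat N ν (r lam1 lam3) x (p.1, p.2.2) (q.1, q.2.2))
      - (α lam1 * dta ν p.1 + α lam3 * dta ν p.2.2
          - (α lam1 * dta ν q.1 + α lam3 * dta ν q.2.2)) *
        r lam1 lam3 x (p.1, p.2.2) (q.1, q.2.2)) * hE
  · simp [h]

lemma F23d (lam2 lam3 : ℂ) (w : ℂ) (ν : Fin N)
    (hd : ∀ p q : Fin N × Fin N,
      DifferentiableAt ℂ (fun t => r lam2 lam3 (Function.update x ν t) p q) (x ν)) :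
    pl23 N (pderivMat N ν (rGauge N α r lam2 lam3) x)
      = Matrix.diagonal (g3 w (α lam2) (α lam3) x) * pl23 N (pderivMat N ν (r lam2 lam3) x) *
          Matrix.diagonal (g3 (-w) (-(α lam2)) (-(α lam3)) x)
        + mcomm (Matrix.diagonal
            (fun p : Fin N × Fin N × Fin N => α lam2 * dta ν p.2.1 + α lam3 * dta ν p.2.2))
            (Matrix.diagonal (g3 w (α lam2) (α lam3) x) * pl23 N (r lam2 lam3 x) *
              Matrix.diagonal (g3 (-w) (-(α lam2)) (-(α lam3)) x)) := by
  ext p q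
  simp only [Matrix.add_apply]
  rw [mcomm_diag_left]
  simp only [pl23, Matrix.mul_diagonal, Matrix.diagonal_mul, g3]
  rw [pderiv_rGauge_apply α r lam2 lam3 x ν _ _ (hd _ _)]
  by_cases h : p.1 = q.1
  · simp only [if_pos h, mul_one]
    have hE : Complex.exp (w * x p.1 + α lam2 * x p.2.1 + α lam3 * x p.2.2) *
        Complex.exp (-w * x q.1 + -(α lam2) * x q.2.1 + -(α lam3) * x q.2.2)
        = Complex.exp (α lam2 * (x p.2.1 - x q.2.1) + α lam3 * (x p.2.2 - x q.2.2)) := by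
      rw [← Complex.exp_add]; congr 1; rw [h]; ring
    linear_combination (-(pderivMat N ν (r lam2 lam3) x (p.2.1, p.2.2) (q.2.1, q.2.2))
      - (α lam2 * dta ν p.2.1 + α lam3 * dta ν p.2.2
          - (α lam2 * dta ν q.2.1 + α lam3 * dta ν q.2.2)) *
        r lam2 lam3 x (p.2.1, p.2.2) (q.2.1, q.2.2)) * hE
  · simp [h]

end Fconj

section Groups

variable (a b c : ℂ) (σ : Matrix (Fin N × Fin N × Fin N) (Fin N × Fin N × Fin N) ℂ)

lemma R12zero
    (he : ∀ p q : Fin N × Fin N × Fin N, p.2.2 ≠ q.2.2 → σ p q = 0)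
    (hct : ∀ (p q : Fin N × Fin N × Fin N) (t : Fin N),
      (dta t p.1 + dta t p.2.1) * σ p q = (dta t q.1 + dta t q.2.1) * σ p q) :
    -((a - c) • mcomm σ (Matrix.diagonal
        (fun p : Fin N × Fin N × Fin N => (if p.1 = p.2.2 then (1:ℂ) else 0) - (N:ℂ)⁻¹)))
      - ((b - c) • mcomm σ (Matrix.diagonal
        (fun p : Fin N × Fin N × Fin N => (if p.2.1 = p.2.2 then (1:ℂ) else 0) - (N:ℂ)⁻¹)))
      - (∑ ν : Fin N, Matrix.diagonal (fun p : Fin N × Fin N × Fin N => dta ν p.2.2) *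
          mcomm (Matrix.diagonal
            (fun p : Fin N × Fin N × Fin N => a * dta ν p.1 + b * dta ν p.2.1)) σ) = 0 := by
  ext p q
  simp only [Matrix.sub_apply, Matrix.neg_apply, Matrix.smul_apply, Matrix.sum_apply,
    Matrix.diagonal_mul, Matrix.zero_apply, smul_eq_mul]
  rw [mcomm_diag_right, mcomm_diag_right,
    sum_dta_weighted p.2.2 (fun ν => mcomm (Matrix.diagonal
      (fun p : Fin N × Fin N × Fin N => a * dta ν p.1 + b * dta ν p.2.1)) σ p q),
    mcomm_diag_left]
  by_cases h : p.2.2 = q.2.2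
  · have hc := hct p q p.2.2
    simp only [dta] at hc ⊢
    rw [← h, ite_flip p.1 p.2.2, ite_flip q.1 p.2.2, ite_flip p.2.1 p.2.2, ite_flip q.2.1 p.2.2]
    linear_combination (-c) * hc
  · simp [he p q h]

lemma R13zero
    (he : ∀ p q : Fin N × Fin N × Fin N, p.2.1 ≠ q.2.1 → σ p q = 0)
    (hct : ∀ (p q : Fin N × Fin N × Fin N) (t : Fin N),
      (dta t p.1 + dta t p.2.2) * σ p q = (dta t q.1 + dta t q.2.2) * σ p q) :
    -((a - b) • mcomm (Matrix.diagonal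
        (fun p : Fin N × Fin N × Fin N => (if p.1 = p.2.1 then (1:ℂ) else 0) - (N:ℂ)⁻¹)) σ)
      - ((b - c) • mcomm σ (Matrix.diagonal
        (fun p : Fin N × Fin N × Fin N => (if p.2.1 = p.2.2 then (1:ℂ) else 0) - (N:ℂ)⁻¹)))
      + (∑ ν : Fin N, Matrix.diagonal (fun p : Fin N × Fin N × Fin N => dta ν p.2.1) *
          mcomm (Matrix.diagonal
            (fun p : Fin N × Fin N × Fin N => a * dta ν p.1 + c * dta ν p.2.2)) σ) = 0 := by
  ext p q
  simp only [Matrix.sub_apply, Matrix.add_apply, Matrix.neg_apply, Matrix.smul_apply,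
    Matrix.sum_apply, Matrix.diagonal_mul, Matrix.zero_apply, smul_eq_mul]
  rw [mcomm_diag_left, mcomm_diag_right,
    sum_dta_weighted p.2.1 (fun ν => mcomm (Matrix.diagonal
      (fun p : Fin N × Fin N × Fin N => a * dta ν p.1 + c * dta ν p.2.2)) σ p q),
    mcomm_diag_left]
  by_cases h : p.2.1 = q.2.1
  · have hc := hct p q p.2.1
    simp only [dta] at hc ⊢
    rw [← h, ite_flip p.1 p.2.1, ite_flip q.1 p.2.1]
    linear_combination b * hc
  · simp [he p q h]

lemma R23zero
    (he : ∀ p q : Fin N × Fin N × Fin N, p.1 ≠ q.1 → σ p q = 0)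
    (hct : ∀ (p q : Fin N × Fin N × Fin N) (t : Fin N),
      (dta t p.2.1 + dta t p.2.2) * σ p q = (dta t q.2.1 + dta t q.2.2) * σ p q) :
    -((a - b) • mcomm (Matrix.diagonal
        (fun p : Fin N × Fin N × Fin N => (if p.1 = p.2.1 then (1:ℂ) else 0) - (N:ℂ)⁻¹)) σ)
      - ((a - c) • mcomm (Matrix.diagonal
        (fun p : Fin N × Fin N × Fin N => (if p.1 = p.2.2 then (1:ℂ) else 0) - (N:ℂ)⁻¹)) σ)
      - (∑ ν : Fin N, Matrix.diagonal (fun p : Fin N × Fin N × Fin N => dta ν p.1) *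
          mcomm (Matrix.diagonal
            (fun p : Fin N × Fin N × Fin N => b * dta ν p.2.1 + c * dta ν p.2.2)) σ) = 0 := by
  ext p q
  simp only [Matrix.sub_apply, Matrix.neg_apply, Matrix.smul_apply, Matrix.sum_apply,
    Matrix.diagonal_mul, Matrix.zero_apply, smul_eq_mul]
  rw [mcomm_diag_left, mcomm_diag_left,
    sum_dta_weighted p.1 (fun ν => mcomm (Matrix.diagonal
      (fun p : Fin N × Fin N × Fin N => b * dta ν p.2.1 + c * dta ν p.2.2)) σ p q),
    mcomm_diag_left]
  by_cases h : p.1 = q.1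
  · have hc := hct p q p.1
    simp only [dta] at hc ⊢
    rw [← h]
    linear_combination (-a) * hc
  · simp [he p q h]

end Groups

section SigmaProps

variable (w w' : Fin N × Fin N × Fin N → ℂ) (A : Matrix (Fin N × Fin N) (Fin N × Fin N) ℂ)

lemma sigma12_he (p q : Fin N × Fin N × Fin N) (h : p.2.2 ≠ q.2.2) :
    (Matrix.diagonal w * pl12 N A * Matrix.diagonal w') p q = 0 := by
  simp [Matrix.mul_diagonal, Matrix.diagonal_mul, pl12, h]

lemma sigma13_he (p q : Fin N × Fin N × Fin N) (h : p.2.1 ≠ q.2.1) :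
    (Matrix.diagonal w * pl13 N A * Matrix.diagonal w') p q = 0 := by
  simp [Matrix.mul_diagonal, Matrix.diagonal_mul, pl13, h]

lemma sigma23_he (p q : Fin N × Fin N × Fin N) (h : p.1 ≠ q.1) :
    (Matrix.diagonal w * pl23 N A * Matrix.diagonal w') p q = 0 := by
  simp [Matrix.mul_diagonal, Matrix.diagonal_mul, pl23, h]

lemma sigma12_hct (hA : CartanInv N A) (p q : Fin N × Fin N × Fin N) (t : Fin N) :
    (dta t p.1 + dta t p.2.1) * (Matrix.diagonal w * pl12 N A * Matrix.diagonal w') p q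
      = (dta t q.1 + dta t q.2.1) * (Matrix.diagonal w * pl12 N A * Matrix.diagonal w') p q := by
  have hc := cartan_entry hA (dta t) (p.1, p.2.1) (q.1, q.2.1)
  dsimp only at hc
  simp only [Matrix.mul_diagonal, Matrix.diagonal_mul, pl12]
  linear_combination (w p * w' q * (if p.2.2 = q.2.2 then (1:ℂ) else 0)) * hc

lemma sigma13_hct (hA : CartanInv N A) (p q : Fin N × Fin N × Fin N) (t : Fin N) :
    (dta t p.1 + dta t p.2.2) * (Matrix.diagonal w * pl13 N A * Matrix.diagonal w') p q
      = (dta t q.1 + dta t q.2.2) * (Matrix.diagonal w * pl13 N A * Matrix.diagonal w') p q := by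
  have hc := cartan_entry hA (dta t) (p.1, p.2.2) (q.1, q.2.2)
  dsimp only at hc
  simp only [Matrix.mul_diagonal, Matrix.diagonal_mul, pl13]
  linear_combination (w p * w' q * (if p.2.1 = q.2.1 then (1:ℂ) else 0)) * hc

lemma sigma23_hct (hA : CartanInv N A) (p q : Fin N × Fin N × Fin N) (t : Fin N) :
    (dta t p.2.1 + dta t p.2.2) * (Matrix.diagonal w * pl23 N A * Matrix.diagonal w') p q
      = (dta t q.2.1 + dta t q.2.2) * (Matrix.diagonal w * pl23 N A * Matrix.diagonal w') p q := by
  have hc := cartan_entry hA (dta t) (p.2.1, p.2.2) (q.2.1, q.2.2)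
  dsimp only at hc
  simp only [Matrix.mul_diagonal, Matrix.diagonal_mul, pl23]
  linear_combination (w p * w' q * (if p.1 = q.1 then (1:ℂ) else 0)) * hc

end SigmaProps

lemma K12_eq : pl12 N (Cmat N) = Matrix.diagonal
    (fun p : Fin N × Fin N × Fin N => (if p.1 = p.2.1 then (1:ℂ) else 0) - (N:ℂ)⁻¹) := by
  rw [Cmat_eq, pl12_diag]

lemma K13_eq : pl13 N (Cmat N) = Matrix.diagonal
    (fun p : Fin N × Fin N × Fin N => (if p.1 = p.2.2 then (1:ℂ) else 0) - (N:ℂ)⁻¹) := by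
  rw [Cmat_eq, pl13_diag]

lemma K23_eq : pl23 N (Cmat N) = Matrix.diagonal
    (fun p : Fin N × Fin N × Fin N => (if p.2.1 = p.2.2 then (1:ℂ) else 0) - (N:ℂ)⁻¹) := by
  rw [Cmat_eq, pl23_diag]

lemma sum_conj (u v : Fin N × Fin N × Fin N → ℂ) (d : Fin N → Fin N × Fin N × Fin N → ℂ)
    (T : Fin N → Matrix (Fin N × Fin N × Fin N) (Fin N × Fin N × Fin N) ℂ) :
    (∑ ν : Fin N, Matrix.diagonal (d ν) * (Matrix.diagonal u * T ν * Matrix.diagonal v))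
      = Matrix.diagonal u * (∑ ν : Fin N, Matrix.diagonal (d ν) * T ν) * Matrix.diagonal v := by
  rw [Finset.mul_sum, Finset.sum_mul]
  apply Finset.sum_congr rfl
  intro ν _
  rw [← Matrix.mul_assoc, ← Matrix.mul_assoc, diag_comm (d ν) u, Matrix.mul_assoc
    (Matrix.diagonal u) (Matrix.diagonal (d ν)) (T ν)]

lemma mcomm_gauge' {I : Type} [Fintype I] [DecidableEq I] {G G' : Matrix I I ℂ}
    (hG'G : G' * G = 1) (A B : Matrix I I ℂ) (k k' : I → ℂ) (s t : ℂ) :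
    mcomm (G * A * G' - s • Matrix.diagonal k) (G * B * G' - t • Matrix.diagonal k')
      = G * mcomm A B * G' - t • mcomm (G * A * G') (Matrix.diagonal k')
        - s • mcomm (Matrix.diagonal k) (G * B * G') :=
  mcomm_gauge hG'G A B _ _ s t (mcomm_diag_diag k k')

lemma gcybe_gauge (α : ℂ → ℂ)
    (r : ℂ → ℂ → (Fin N → ℂ) → Matrix (Fin N × Fin N) (Fin N × Fin N) ℂ)
    (lam1 lam2 lam3 : ℂ) (x : Fin N → ℂ)
    (hd12 : ∀ (ν : Fin N) (p q : Fin N × Fin N),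
      DifferentiableAt ℂ (fun t => r lam1 lam2 (Function.update x ν t) p q) (x ν))
    (hd13 : ∀ (ν : Fin N) (p q : Fin N × Fin N),
      DifferentiableAt ℂ (fun t => r lam1 lam3 (Function.update x ν t) p q) (x ν))
    (hd23 : ∀ (ν : Fin N) (p q : Fin N × Fin N),
      DifferentiableAt ℂ (fun t => r lam2 lam3 (Function.update x ν t) p q) (x ν))
    (ha12 : CartanInv N (r lam1 lam2 x))
    (ha13 : CartanInv N (r lam1 lam3 x))
    (ha23 : CartanInv N (r lam2 lam3 x))
    (hgc : GCYBE N r lam1 lam2 lam3 x) :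
    GCYBE N (rGauge N α r) lam1 lam2 lam3 x := by
  have hG'G : Matrix.diagonal (g3 (-(α lam1)) (-(α lam2)) (-(α lam3)) x) * Matrix.diagonal (g3 (α lam1) (α lam2) (α lam3) x) = 1 := g3_inv_mul _ _ _ x
  have h12 := F12 α r x lam1 lam2 (α lam3)
  have h13 := F13 α r x lam1 lam3 (α lam2)
  have h23 := F23 α r x lam2 lam3 (α lam1)
  have h12d : ∀ ν : Fin N, _ := fun ν => F12d α r x lam1 lam2 (α lam3) ν (hd12 ν)
  have h13d : ∀ ν : Fin N, _ := fun ν => F13d α r x lam1 lam3 (α lam2) ν (hd13 ν)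
  have h23d : ∀ ν : Fin N, _ := fun ν => F23d α r x lam2 lam3 (α lam1) ν (hd23 ν)
  have hP1 : ∀ ν : Fin N, pl1 N (E N ν ν)
      = Matrix.diagonal (fun p : Fin N × Fin N × Fin N => dta ν p.1) := fun ν => by
    rw [E_diag, pl1_diag]
  have hP2 : ∀ ν : Fin N, pl2 N (E N ν ν)
      = Matrix.diagonal (fun p : Fin N × Fin N × Fin N => dta ν p.2.1) := fun ν => by
    rw [E_diag, pl2_diag]
  have hP3 : ∀ ν : Fin N, pl3 N (E N ν ν)
      = Matrix.diagonal (fun p : Fin N × Fin N × Fin N => dta ν p.2.2) := fun ν => by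
    rw [E_diag, pl3_diag]
  unfold GCYBE at hgc ⊢
  simp only [hP1, hP2, hP3] at hgc ⊢
  rw [h12, h13, h23]
  simp only [h12d, h13d, h23d, K12_eq, K13_eq, K23_eq]
  simp only [mul_add, Finset.sum_add_distrib]
  rw [sum_conj, sum_conj, sum_conj]
  rw [mcomm_gauge' hG'G, mcomm_gauge' hG'G, mcomm_gauge' hG'G]
  have key := congrArg (fun M => Matrix.diagonal (g3 (α lam1) (α lam2) (α lam3) x) * M * Matrix.diagonal (g3 (-(α lam1)) (-(α lam2)) (-(α lam3)) x)) hgc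
  simp only [Matrix.mul_add, Matrix.add_mul, Matrix.mul_sub, Matrix.sub_mul,
    Matrix.mul_zero, Matrix.zero_mul] at key
  have grp12 := R12zero (α lam1) (α lam2) (α lam3)
    (Matrix.diagonal (g3 (α lam1) (α lam2) (α lam3) x) * pl12 N (r lam1 lam2 x) * Matrix.diagonal (g3 (-(α lam1)) (-(α lam2)) (-(α lam3)) x))
    (fun p q h => sigma12_he _ _ _ p q h)
    (fun p q t => sigma12_hct _ _ _ ha12 p q t)
  have grp13 := R13zero (α lam1) (α lam2) (α lam3)
    (Matrix.diagonal (g3 (α lam1) (α lam2) (α lam3) x) * pl13 N (r lam1 lam3 x) * Matrix.diagonal (g3 (-(α lam1)) (-(α lam2)) (-(α lam3)) x))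
    (fun p q h => sigma13_he _ _ _ p q h)
    (fun p q t => sigma13_hct _ _ _ ha13 p q t)
  have grp23 := R23zero (α lam1) (α lam2) (α lam3)
    (Matrix.diagonal (g3 (α lam1) (α lam2) (α lam3) x) * pl23 N (r lam2 lam3 x) * Matrix.diagonal (g3 (-(α lam1)) (-(α lam2)) (-(α lam3)) x))
    (fun p q h => sigma23_he _ _ _ p q h)
    (fun p q t => sigma23_hct _ _ _ ha23 p q t)
  have hsum := congrArg₂ HAdd.hAdd (congrArg₂ HAdd.hAdd (congrArg₂ HAdd.hAdd key grp12) grp13) grp23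
  simp only [add_zero] at hsum
  rw [← hsum]
  module

end GaugeAux

theorem gauge_freedom_GCYBE (hN : 2 ≤ N)
    (Λ : Set ℂ) (U : Set (Fin N → ℂ)) (hU : IsOpen U)
    (r : ℂ → ℂ → (Fin N → ℂ) → Matrix (Fin N × Fin N) (Fin N × Fin N) ℂ)
    (hdiff : ∀ lam ∈ Λ, ∀ mu ∈ Λ, ∀ p q : Fin N × Fin N,
      DifferentiableOn ℂ (fun x => r lam mu x p q) U)
    (ha : ∀ lam ∈ Λ, ∀ mu ∈ Λ, ∀ x ∈ U, CartanInv N (r lam mu x))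
    (hb : ∀ lam ∈ Λ, ∀ mu ∈ Λ, ∀ x ∈ U,
      (∑ ν : Fin N, pderivMat N ν (r lam mu) x) = 0)
    (hc : ∀ lam₁ ∈ Λ, ∀ lam₂ ∈ Λ, ∀ lam₃ ∈ Λ, ∀ x ∈ U, GCYBE N r lam₁ lam₂ lam₃ x)
    (α : ℂ → ℂ) :
    (∀ lam ∈ Λ, ∀ mu ∈ Λ, ∀ x ∈ U, CartanInv N (rGauge N α r lam mu x)) ∧
    (∀ lam ∈ Λ, ∀ mu ∈ Λ, ∀ x ∈ U,
      (∑ ν : Fin N, pderivMat N ν (rGauge N α r lam mu) x) = 0) ∧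
    (∀ lam₁ ∈ Λ, ∀ lam₂ ∈ Λ, ∀ lam₃ ∈ Λ, ∀ x ∈ U,
      GCYBE N (rGauge N α r) lam₁ lam₂ lam₃ x) := by
  
  refine ⟨?_, ?_, ?_⟩
  · intro lam hl mu hm x hx
    exact GaugeAux.rGauge_cartan α r lam mu x (ha lam hl mu hm x hx)
  · intro lam hl mu hm x hx
    exact GaugeAux.rGauge_sum_pderiv α r lam mu hU hx
      (fun p q => hdiff lam hl mu hm p q) (hb lam hl mu hm x hx)
  · intro lam1 h1 lam2 h2 lam3 h3 x hx
    exact GaugeAux.gcybe_gauge α r lam1 lam2 lam3 x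
      (fun ν p q => GaugeAux.diffAt_entry hU (hdiff lam1 h1 lam2 h2 p q) hx ν)
      (fun ν p q => GaugeAux.diffAt_entry hU (hdiff lam1 h1 lam3 h3 p q) hx ν)
      (fun ν p q => GaugeAux.diffAt_entry hU (hdiff lam2 h2 lam3 h3 p q) hx ν)
      (ha lam1 h1 lam2 h2 x hx) (ha lam1 h1 lam3 h3 x hx) (ha lam2 h2 lam3 h3 x hx)
      (hc lam1 h1 lam2 h2 lam3 h3 x hx)
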